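/- Let V be a finite set with probability weights p : V → ℝ (p i ≥ 0 for all i and Σ_{i∈V} p i = 1), let μ be the probability measure on V with μ({i}) = p i, let n_S ≥ 1, and let L : V × V → ℝ be any fixed real-valued function. Under the product measure μ^{⊗ n_S} on functions f : Fin n_S → V (modeling n_S independent draws with replacement, with sampled node set V_S = range f), the expectation of the random variable f ↦ (1/n_S²) Σ_{(i,j)∈V×V} 1_{(i ∈ range f ∧ j ∈ range f)} · L(i,j) equals (1/n_S²) · [ Σ_{i ∈ V} (1 − (1 − p i)^{n_S}) · L(i,i) + Σ_{(i,j)∈V×V, i ≠ j} (1 − (1 − p i)^{n_S} − (1 − p j)^{n_S} + (1 − p i − p j)^{n_S}) · L(i,j) ]. -/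

import Mathlib

open MeasureTheory

theorem fastgae_explicit_expected_loss_with_replacement
    {V : Type*} [Fintype V] [DecidableEq V] [MeasurableSpace V]
    [MeasurableSingletonClass V]
    (p : V → ℝ) (hp : ∀ i, 0 ≤ p i) (hsum : ∑ i, p i = 1)
    (μ : Measure V) [IsProbabilityMeasure μ]
    (hμ : ∀ i, μ {i} = ENNReal.ofReal (p i))
    (nS : ℕ) (hnS : 1 ≤ nS)
    (L : V × V → ℝ) :
    ∫ f, (1 / (nS : ℝ) ^ 2) * ∑ ij : V × V,
        (if (∃ k, f k = ij.1) ∧ (∃ k, f k = ij.2) then (1 : ℝ) else 0) * L ij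
      ∂(Measure.pi fun _ : Fin nS => μ)
      = (1 / (nS : ℝ) ^ 2) *
          ((∑ i : V, (1 - (1 - p i) ^ nS) * L (i, i)) +
            ∑ ij ∈ Finset.univ.filter (fun ij : V × V => ij.1 ≠ ij.2),
              (1 - (1 - p ij.1) ^ nS - (1 - p ij.2) ^ nS
                + (1 - p ij.1 - p ij.2) ^ nS) * L ij) := by
  classical
  set μs : Measure (Fin nS → V) := Measure.pi fun _ : Fin nS => μ with hμs
  haveI : IsProbabilityMeasure μs := by
    rw [hμs]; infer_instance
  have hpi_le : ∀ i, p i ≤ 1 := by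
    intro i
    calc p i ≤ ∑ j, p j := Finset.single_le_sum (fun j _ => hp j) (Finset.mem_univ i)
    _ = 1 := hsum
  set A : V → Set (Fin nS → V) := fun i => {f | ∃ k, f k = i} with hA
  have hmeasA : ∀ i : V, MeasurableSet (A i) := by
    intro i
    have : A i = ⋃ k, (fun f : Fin nS → V => f k) ⁻¹' {i} := by
      ext f; simp [hA]
    rw [this]
    exact MeasurableSet.iUnion fun k => (measurable_pi_apply k) (measurableSet_singleton i)
  have hall : ∀ S : Set V, MeasurableSet S → μs {f | ∀ k, f k ∈ S} = μ S ^ nS := by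
    intro S hS
    have h1 : {f : Fin nS → V | ∀ k, f k ∈ S} = Set.pi Set.univ (fun _ => S) := by
      ext f; simp [Set.mem_pi]
    rw [hμs, h1, Measure.pi_pi]
    simp [Finset.prod_const]
  -- complement of A i
  have hAc : ∀ i, (A i)ᶜ = {f : Fin nS → V | ∀ k, f k ∈ ({i} : Set V)ᶜ} := by
    intro i; ext f; simp [hA]
  have hAcc : ∀ i j, (A i)ᶜ ∩ (A j)ᶜ = {f : Fin nS → V | ∀ k, f k ∈ ({i, j} : Set V)ᶜ} := by
    intro i j; ext f
    simp [hA, Set.mem_inter_iff, not_or, forall_and]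
  -- real values
  have htri : ∀ S : Set V, (μ S).toReal ≤ 1 ∧ μ S ≠ ⊤ := by
    intro S
    have h := measure_ne_top μ S
    refine ⟨?_, h⟩
    have := prob_le_one (μ := μ) (s := S)
    exact ENNReal.toReal_le_of_le_ofReal zero_le_one (by simpa using this)
  have hsingle : ∀ i, (μ ({i} : Set V)ᶜ).toReal = 1 - p i := by
    intro i
    rw [measure_compl (measurableSet_singleton i) (measure_ne_top μ _), hμ i]
    rw [measure_univ, ENNReal.toReal_sub_of_le (by simpa using ENNReal.ofReal_le_one.mpr (hpi_le i)) (by simp)]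
    simp [ENNReal.toReal_ofReal (hp i)]
  have hpair_le : ∀ i j : V, i ≠ j → p i + p j ≤ 1 := by
    intro i j hij
    have := Finset.sum_le_sum_of_subset_of_nonneg
      (Finset.insert_subset_iff.mpr ⟨Finset.mem_univ i, Finset.singleton_subset_iff.mpr (Finset.mem_univ j)⟩)
      (fun k _ _ => hp k)
    rw [Finset.sum_insert (by simpa using hij), Finset.sum_singleton] at this
    linarith [hsum ▸ this]
  have hpairc : ∀ i j : V, i ≠ j → (μ ({i, j} : Set V)ᶜ).toReal = 1 - p i - p j := by
    intro i j hij
    have hm : μ ({i, j} : Set V) = ENNReal.ofReal (p i + p j) := by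
      have : ({i, j} : Set V) = {i} ∪ {j} := Set.insert_eq i {j}
      rw [this, measure_union (by simpa using hij) (measurableSet_singleton j), hμ i, hμ j,
        ENNReal.ofReal_add (hp i) (hp j)]
    rw [measure_compl (by measurability) (measure_ne_top μ _), hm, measure_univ,
      ENNReal.toReal_sub_of_le (by simpa using ENNReal.ofReal_le_one.mpr (hpair_le i j hij)) (by simp)]
    rw [ENNReal.toReal_ofReal (by linarith [hp i, hp j]), ENNReal.toReal_one]
    ring
  -- μs of complements
  have hmc : ∀ i, (μs (A i)ᶜ).toReal = (1 - p i) ^ nS := by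
    intro i
    rw [hAc i, hall _ (measurableSet_singleton i).compl, ENNReal.toReal_pow, hsingle i]
  have hmcc : ∀ i j : V, i ≠ j → (μs ((A i)ᶜ ∩ (A j)ᶜ)).toReal = (1 - p i - p j) ^ nS := by
    intro i j hij
    rw [hAcc i j, hall _ (by measurability), ENNReal.toReal_pow, hpairc i j hij]
  -- key probability of intersection
  have hprob : ∀ i j : V, (μs (A i ∩ A j)).toReal
      = if i = j then 1 - (1 - p i) ^ nS
        else 1 - (1 - p i) ^ nS - (1 - p j) ^ nS + (1 - p i - p j) ^ nS := by
    intro i j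
    have hcompl : ∀ s : Set (Fin nS → V), MeasurableSet s →
        (μs s).toReal = 1 - (μs sᶜ).toReal := by
      intro s hs
      have h1 : μs s + μs sᶜ = 1 := by
        rw [measure_add_measure_compl hs, measure_univ]
      have h2 := congrArg ENNReal.toReal h1
      rw [ENNReal.toReal_add (measure_ne_top _ _) (measure_ne_top _ _)] at h2
      simp at h2; linarith
    by_cases hij : i = j
    · subst hij
      rw [if_pos rfl, Set.inter_self, hcompl _ (hmeasA i), hmc i]
    · rw [if_neg hij]
      have hu : (A i ∩ A j)ᶜ = (A i)ᶜ ∪ (A j)ᶜ := by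
        rw [Set.compl_inter]
      have hincl : (μs ((A i)ᶜ ∪ (A j)ᶜ)).toReal
          = (1 - p i) ^ nS + (1 - p j) ^ nS - (1 - p i - p j) ^ nS := by
        have h1 := measure_union_add_inter (μ := μs) (A i)ᶜ (hmeasA j).compl
        have h2 := congrArg ENNReal.toReal h1
        rw [ENNReal.toReal_add (measure_ne_top _ _) (measure_ne_top _ _),
          ENNReal.toReal_add (measure_ne_top _ _) (measure_ne_top _ _)] at h2
        rw [hmc i, hmc j, hmcc i j hij] at h2
        linarith
      rw [hcompl _ ((hmeasA i).inter (hmeasA j)), hu, hincl]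
      ring
  -- integral of each term
  have key : ∀ ij : V × V,
      (∫ f, (if (∃ k, f k = ij.1) ∧ (∃ k, f k = ij.2) then (1:ℝ) else 0) * L ij ∂μs)
        = (μs (A ij.1 ∩ A ij.2)).toReal * L ij := by
    intro ij
    have heq : (fun f : Fin nS → V =>
        (if (∃ k, f k = ij.1) ∧ (∃ k, f k = ij.2) then (1:ℝ) else 0) * L ij)
        = Set.indicator (A ij.1 ∩ A ij.2) (fun _ => L ij) := by
      funext f
      by_cases h : (∃ k, f k = ij.1) ∧ (∃ k, f k = ij.2)
      · rw [if_pos h, one_mul, Set.indicator_of_mem]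
        exact ⟨h.1, h.2⟩
      · rw [if_neg h, zero_mul, Set.indicator_of_notMem]
        intro hmem; exact h ⟨hmem.1, hmem.2⟩
    rw [heq, integral_indicator_const _ ((hmeasA ij.1).inter (hmeasA ij.2))]
    simp [smul_eq_mul, measureReal_def]
  have hint : ∀ ij : V × V, Integrable (fun f : Fin nS → V =>
      (if (∃ k, f k = ij.1) ∧ (∃ k, f k = ij.2) then (1:ℝ) else 0) * L ij) μs := by
    intro ij
    have heq : (fun f : Fin nS → V =>
        (if (∃ k, f k = ij.1) ∧ (∃ k, f k = ij.2) then (1:ℝ) else 0) * L ij)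
        = Set.indicator (A ij.1 ∩ A ij.2) (fun _ => L ij) := by
      funext f
      by_cases h : (∃ k, f k = ij.1) ∧ (∃ k, f k = ij.2)
      · rw [if_pos h, one_mul, Set.indicator_of_mem]; exact ⟨h.1, h.2⟩
      · rw [if_neg h, zero_mul, Set.indicator_of_notMem]
        intro hmem; exact h ⟨hmem.1, hmem.2⟩
    rw [heq]
    exact (integrable_const _).indicator ((hmeasA ij.1).inter (hmeasA ij.2))
  rw [integral_const_mul, integral_finset_sum _ (fun ij _ => hint ij)]
  congr 1
  rw [← Finset.sum_filter_add_sum_filter_not Finset.univ (fun ij : V × V => ij.1 = ij.2)]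
  congr 1
  · have hdiag : Finset.filter (fun ij : V × V => ij.1 = ij.2) Finset.univ
        = Finset.univ.image (fun i : V => (i, i)) := by
      ext ij
      simp only [Finset.mem_filter, Finset.mem_univ, true_and, Finset.mem_image]
      constructor
      · intro h; exact ⟨ij.1, by rw [Prod.ext_iff]; exact ⟨rfl, h⟩⟩
      · rintro ⟨i, rfl⟩; rfl
    rw [hdiag, Finset.sum_image (fun a _ b _ h => (Prod.ext_iff.mp h).1)]
    refine Finset.sum_congr rfl fun i _ => ?_
    rw [key (i, i), hprob i i, if_pos rfl]
  · refine Finset.sum_congr (by simp) fun ij hij => ?_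
    simp only [Finset.mem_filter, Finset.mem_univ, true_and] at hij
    rw [key ij, hprob ij.1 ij.2, if_neg hij]
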